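/- Let H be bounded self-adjoint and S unitary on a complex Hilbert space H, with ρ : ℝ⁺ → ℝ⁺ a probability density (∫₀^∞ ρ = 1). For η ∈ H with ‖η‖ = 1, the function χ⁰(z) = √(ρ(z)) η for z > 0 and 0 for z ≤ 0 is a unit vector in L²(ℝ, H), and for t > 0 the evolved vector χᵗ = V^t χ⁰ (with (V^tχ)(z) = e^{(i/ħ)zH}S^{Δ₀ᵗ(z+t)}e^{−(i/ħ)(z+t)H}χ(z+t)) satisfies ∫₀^∞ ‖χᵗ(s − t)‖² ds = 1 and χᵗ(s − t) = V(t,s)√(ρ(s))η where V(t,s) = e^{(i/ħ)(s−t)H}S^{1_{[0,t)}(s)}e^{−(i/ħ)sH}. -/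

import Mathlib

open MeasureTheory

noncomputable section

variable {H : Type*} [NormedAddCommGroup H] [InnerProductSpace ℂ H] [CompleteSpace H]

/-- `expIH ħ Hop r = e^{(i/ħ) r Hop}`. -/
def expIH (hbar : ℝ) (Hop : H →L[ℂ] H) (r : ℝ) : H →L[ℂ] H :=
  NormedSpace.exp (((r / hbar : ℝ) : ℂ) • Complex.I • Hop)

/-- `Δ₀ᵗ(s) = 1_t(s) − 1_0(s)` with `1_t` the indicator of `(−∞, t)`. -/
def DeltaZ (t s : ℝ) : ℤ := (if s < t then 1 else 0) - (if s < 0 then 1 else 0)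

/-- The boundary-value evolution
`(V^t χ)(z) = e^{(i/ħ)zH} S^{Δ₀ᵗ(z+t)} e^{−(i/ħ)(z+t)H} χ(z+t)`. -/
def Vgrp (hbar : ℝ) (Hop : H →L[ℂ] H) (S : unitary (H →L[ℂ] H)) (t : ℝ)
    (χ : ℝ → H) : ℝ → H := fun z =>
  expIH hbar Hop z
    (((S ^ DeltaZ t (z + t) : unitary (H →L[ℂ] H)) : H →L[ℂ] H)
      (expIH hbar Hop (-(z + t)) (χ (z + t))))

/-- The initial product state `χ⁰(z) = √(ρ(z)) η` for `z > 0`, `0` for `z ≤ 0`. -/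
def chiInit (ρ : ℝ → ℝ) (η : H) : ℝ → H := fun z =>
  if 0 < z then Real.sqrt (ρ z) • η else 0

lemma expIH_mem_unitary (hbar : ℝ) (Hop : H →L[ℂ] H) (hH : IsSelfAdjoint Hop) (r : ℝ) :
    expIH hbar Hop r ∈ unitary (H →L[ℂ] H) := by
  letI : NormedAlgebra ℚ (H →L[ℂ] H) := NormedAlgebra.restrictScalars ℚ ℂ _
  apply NormedSpace.exp_mem_unitary_of_mem_skewAdjoint
  rw [skewAdjoint.mem_iff]
  simp only [star_smul, Complex.star_def, Complex.conj_ofReal, Complex.conj_I, hH.star_eq,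
    neg_smul, smul_neg]

lemma norm_expIH (hbar : ℝ) (Hop : H →L[ℂ] H) (hH : IsSelfAdjoint Hop) (r : ℝ) (x : H) :
    ‖expIH hbar Hop r x‖ = ‖x‖ :=
  ContinuousLinearMap.norm_map_of_mem_unitary (expIH_mem_unitary hbar Hop hH r) x

lemma norm_Vgrp (hbar : ℝ) (Hop : H →L[ℂ] H) (hH : IsSelfAdjoint Hop)
    (S : unitary (H →L[ℂ] H)) (t : ℝ) (χ : ℝ → H) (z : ℝ) :
    ‖Vgrp hbar Hop S t χ z‖ = ‖χ (z + t)‖ := by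
  unfold Vgrp
  rw [norm_expIH hbar Hop hH,
    ContinuousLinearMap.norm_map_of_mem_unitary
      (S ^ DeltaZ t (z + t) : unitary (H →L[ℂ] H)).prop,
    norm_expIH hbar Hop hH]

lemma norm_sq_chiInit (ρ : ℝ → ℝ) (hρpos : ∀ s : ℝ, 0 < s → 0 < ρ s)
    (η : H) (hη : ‖η‖ = 1) (z : ℝ) :
    ‖chiInit ρ η z‖ ^ 2 = Set.indicator (Set.Ioi 0) ρ z := by
  unfold chiInit
  by_cases hz : 0 < z
  · rw [if_pos hz, Set.indicator_of_mem (Set.mem_Ioi.mpr hz), norm_smul, hη, mul_one,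
      Real.norm_eq_abs, abs_of_nonneg (Real.sqrt_nonneg _), Real.sq_sqrt (hρpos z hz).le]
  · rw [if_neg hz, Set.indicator_of_notMem (by simpa using hz)]
    simp

/-- For a probability density `ρ` on `(0,∞)` and a unit vector `η`, the initial
state `χ⁰ = √ρ ⊗ η` is a unit vector of `L²(ℝ, H)`, and the deterministically
evolved `χᵗ = V^t χ⁰` reproduces the stochastic single-jump evolution:
`∫₀^∞ ‖χᵗ(s−t)‖² ds = 1` and `χᵗ(s−t) = V(t,s)√(ρ(s))η` with
`V(t,s) = e^{(i/ħ)(s−t)H} S^{1_{[0,t)}(s)} e^{−(i/ħ)sH}`. -/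
theorem stochastic_representation (hbar : ℝ) (hh : 0 < hbar)
    (Hop : H →L[ℂ] H) (hH : IsSelfAdjoint Hop)
    (S : unitary (H →L[ℂ] H))
    (ρ : ℝ → ℝ) (hρpos : ∀ s : ℝ, 0 < s → 0 < ρ s)
    (hρint : IntegrableOn ρ (Set.Ioi 0))
    (hρnorm : ∫ s in Set.Ioi (0 : ℝ), ρ s = 1)
    (η : H) (hη : ‖η‖ = 1) :
    (∫ z : ℝ, ‖chiInit ρ η z‖ ^ 2 = 1) ∧
    ∀ t : ℝ, 0 < t →
      (∫ s in Set.Ioi (0 : ℝ), ‖Vgrp hbar Hop S t (chiInit ρ η) (s - t)‖ ^ 2 = 1) ∧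
      (∀ s : ℝ, 0 < s →
        Vgrp hbar Hop S t (chiInit ρ η) (s - t) =
          (expIH hbar Hop (s - t) ∘L
            (if 0 ≤ s ∧ s < t then (S : H →L[ℂ] H) else 1) ∘L
              expIH hbar Hop (-s)) (Real.sqrt (ρ s) • η)) := by
  constructor
  · have : (fun z : ℝ => ‖chiInit ρ η z‖ ^ 2) = Set.indicator (Set.Ioi 0) ρ := by
      funext z; exact norm_sq_chiInit ρ hρpos η hη z
    rw [this, MeasureTheory.integral_indicator measurableSet_Ioi, hρnorm]
  · intro t ht
    constructor
    · have : ∫ s in Set.Ioi (0 : ℝ), ‖Vgrp hbar Hop S t (chiInit ρ η) (s - t)‖ ^ 2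
          = ∫ s in Set.Ioi (0 : ℝ), ρ s := by
        apply setIntegral_congr_fun measurableSet_Ioi
        intro s hs
        show ‖Vgrp hbar Hop S t (chiInit ρ η) (s - t)‖ ^ 2 = ρ s
        rw [norm_Vgrp hbar Hop hH, sub_add_cancel]
        rw [norm_sq_chiInit ρ hρpos η hη, Set.indicator_of_mem hs]
      rw [this, hρnorm]
    · intro s hs
      unfold Vgrp DeltaZ chiInit
      rw [sub_add_cancel]
      rw [if_pos hs, if_neg (not_lt.mpr hs.le)]
      by_cases hst : s < t
      · rw [if_pos hst, if_pos ⟨hs.le, hst⟩, sub_zero, zpow_one]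
        rfl
      · rw [if_neg hst, if_neg (fun h => hst h.2), sub_zero, zpow_zero]
        simp only [OneMemClass.coe_one, ContinuousLinearMap.one_apply,
          ContinuousLinearMap.comp_apply]

end
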